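/- Let n ≥ 2 be a natural number and define C₂ : (0,1/2) → ℝ by C₂(w) = (10w+3)/(30·w·(1−2w)) + 1/(6w) + (n−1)/(6w). Then w* = (5n + 3 − 2√(10n+6))/(10(n−1)) lies in (0,1/2) and is the unique minimizer of C₂ on (0,1/2); that is, C₂(w*) < C₂(w) for every w ∈ (0,1/2) with w ≠ w*. -/

import Mathlib

set_option maxHeartbeats 1000000


/-- Quadratic regression, Case 2: unique minimizer of
C₂(w) = (10w+3)/(30w(1-2w)) + 1/(6w) + (n-1)/(6w) on (0,1/2). -/
theorem stmt_7 (n : ℕ) (hn : 2 ≤ n) :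
    (5*(n:ℝ) + 3 - 2 * Real.sqrt (10*(n:ℝ) + 6)) / (10 * ((n:ℝ) - 1)) ∈
        Set.Ioo (0:ℝ) (1/2) ∧
    ∀ w ∈ Set.Ioo (0:ℝ) (1/2),
      w ≠ (5*(n:ℝ) + 3 - 2 * Real.sqrt (10*(n:ℝ) + 6)) / (10 * ((n:ℝ) - 1)) →
      (fun w : ℝ => (10*w + 3) / (30 * w * (1 - 2*w)) + 1 / (6*w) + ((n:ℝ) - 1) / (6*w))
          ((5*(n:ℝ) + 3 - 2 * Real.sqrt (10*(n:ℝ) + 6)) / (10 * ((n:ℝ) - 1))) <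
        (fun w : ℝ => (10*w + 3) / (30 * w * (1 - 2*w)) + 1 / (6*w) + ((n:ℝ) - 1) / (6*w)) w := by
  set N : ℝ := (n:ℝ) with hNdef
  have hN : (2:ℝ) ≤ N := by rw [hNdef]; exact_mod_cast hn
  set s : ℝ := Real.sqrt (10*N + 6) with hsdef
  have hs0 : 0 ≤ s := Real.sqrt_nonneg _
  have hs2 : s^2 = 10*N + 6 := Real.sq_sqrt (by linarith)
  have hs4 : 4 < s := by
    rw [hsdef, show (4:ℝ) = Real.sqrt 16 by
      rw [show (16:ℝ) = 4^2 by norm_num, Real.sqrt_sq (by norm_num)]]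
    exact Real.sqrt_lt_sqrt (by norm_num) (by linarith)
  have hb : 0 < 10 * (N - 1) := by linarith
  have hslt : s < (5*N + 3)/2 := by
    rw [hsdef, show (5*N+3)/2 = ((5*N+3)/2) by rfl]
    rw [Real.sqrt_lt' (by linarith)]
    nlinarith
  have hnum : 0 < 5*N + 3 - 2*s := by linarith
  set W : ℝ := (5*N + 3 - 2*s) / (10 * (N - 1)) with hWdef
  have hW0 : 0 < W := div_pos hnum hb
  have hWhalf : W < 1/2 := by
    rw [hWdef, div_lt_iff₀ hb]
    linarith
  have hbne : (10 * (N - 1)) ≠ 0 := ne_of_gt hb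
  have hrel : 2*(10*(N-1))*W^2 - 4*(5*N+3)*W + (5*N+3) = 0 := by
    have hW' : W * (10*(N-1)) = 5*N+3-2*s := by rw [hWdef]; exact div_mul_cancel₀ _ hbne
    have h10 : (10*(N-1)) * (2*(10*(N-1))*W^2 - 4*(5*N+3)*W + (5*N+3)) = 0 := by
      linear_combination (2*(W*(10*(N-1)) + (5*N+3-2*s)) - 4*(5*N+3)) * hW' + 8 * hs2
    exact (mul_eq_zero.mp h10).resolve_left hbne
  have hWne : W ≠ 0 := ne_of_gt hW0
  set m : ℝ := (5*N + 3) / (60 * W^2) with hmdef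
  have hm : 0 < m := div_pos (by linarith) (by positivity)
  have hA : 60*m*W^2 = 5*N + 3 := by
    rw [hmdef]; field_simp
  have hB : 30*m*(4*W - 1) = 10*(N - 1) := by
    rw [hmdef]; field_simp
    nlinarith [hrel]
  have hid : ∀ v : ℝ, (5*N+3) - (10*(N-1))*v
      = 30*m*(v*(1-2*v)) + 60*m*(v - W)^2 := by
    intro v
    linear_combination (-1) * hA + v * hB
  have hC : ∀ v : ℝ, 0 < v → v < 1/2 →
      (10*v + 3) / (30 * v * (1 - 2*v)) + 1 / (6*v) + (N - 1) / (6*v)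
        = ((5*N+3) - (10*(N-1))*v) / (30 * v * (1 - 2*v)) := by
    intro v hv0 hv2
    have h1 : v ≠ 0 := ne_of_gt hv0
    have h2 : 1 - 2*v ≠ 0 := by intro h; nlinarith
    rw [div_add_div _ _ (mul_ne_zero (mul_ne_zero (by norm_num) h1) h2) (mul_ne_zero (by norm_num) h1),
      div_add_div _ _ (mul_ne_zero (mul_ne_zero (mul_ne_zero (by norm_num) h1) h2) (mul_ne_zero (by norm_num) h1)) (mul_ne_zero (by norm_num) h1),
      div_eq_div_iff (mul_ne_zero (mul_ne_zero (mul_ne_zero (mul_ne_zero (by norm_num) h1) h2) (mul_ne_zero (by norm_num) h1)) (mul_ne_zero (by norm_num) h1)) (mul_ne_zero (mul_ne_zero (by norm_num) h1) h2)]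
    ring
  refine ⟨⟨hW0, hWhalf⟩, ?_⟩
  rintro w ⟨hw0, hw2⟩ hne
  have hdenw : 0 < 30 * w * (1 - 2*w) := mul_pos (mul_pos (by norm_num) hw0) (by linarith)
  have hdenW : 0 < 30 * W * (1 - 2*W) := mul_pos (mul_pos (by norm_num) hW0) (by linarith)
  show (10*W + 3) / (30 * W * (1 - 2*W)) + 1 / (6*W) + (N - 1) / (6*W)
      < (10*w + 3) / (30 * w * (1 - 2*w)) + 1 / (6*w) + (N - 1) / (6*w)
  rw [hC W hW0 hWhalf, hC w hw0 hw2, div_lt_div_iff₀ hdenW hdenw]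
  have e1 : (5*N+3) - (10*(N-1))*W = 30*m*(W*(1-2*W)) := by
    linear_combination hid W
  have e2 : (5*N+3) - (10*(N-1))*w = 30*m*(w*(1-2*w)) + 60*m*(w - W)^2 := hid w
  rw [e1, e2]
  have hsq : 0 < (w - W)^2 := by
    have : w - W ≠ 0 := sub_ne_zero.mpr hne
    positivity
  nlinarith [mul_pos (mul_pos hm hsq) (mul_pos hW0 (show (0:ℝ) < 1 - 2*W by linarith))]
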